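/- For all integers k ≥ 1 and n ≥ 1, one has D_k(n) ≤ min{2^b : b ≥ 0, 2^b ≥ n}; that is, the discriminator D_k(n) never exceeds the smallest power of 2 that is at least n. -/

import Mathlib

/-- The Shallit sequence `U(k)`: `U₀ = 0`, `U₁ = 1`,
`U_{n+2} = (4k+2) U_{n+1} - U_n`. -/
def shallitU (k : ℕ) : ℕ → ℤ
  | 0 => 0
  | 1 => 1
  | n + 2 => (4 * (k : ℤ) + 2) * shallitU k (n + 1) - shallitU k n

/-- `U₀(k), …, U_{n-1}(k)` are pairwise incongruent modulo `m`. -/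
def Discriminates (k m n : ℕ) : Prop :=
  ∀ i j : ℕ, i < n → j < n → shallitU k i ≡ shallitU k j [ZMOD (m : ℤ)] → i = j

/-- The discriminator `D_k(n)`: the smallest positive integer `m` such that
`U₀(k), …, U_{n-1}(k)` are pairwise incongruent modulo `m`. -/
noncomputable def shallitD (k n : ℕ) : ℕ :=
  sInf {m : ℕ | 0 < m ∧ Discriminates k m n}

/-- The index of appearance `z_k(m)`: the smallest `n ≥ 1` with `m ∣ U_n(k)`. -/
noncomputable def shallitZ (k m : ℕ) : ℕ :=
  sInf {n : ℕ | 0 < n ∧ (m : ℤ) ∣ shallitU k n}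

/-- The incongruence index `ι_k(m)`: the largest `j` such that
`U₀(k), …, U_{j-1}(k)` are pairwise distinct modulo `m`. -/
noncomputable def shallitIota (k m : ℕ) : ℕ :=
  sSup {j : ℕ | Discriminates k m j}

/-- `P(N)`: positive integers all of whose prime divisors divide `N`. -/
def setP (N : ℕ) : Set ℕ :=
  {m | 0 < m ∧ ∀ p : ℕ, p.Prime → p ∣ m → p ∣ N}

/-- The set `A_k`. -/
def setA (k : ℕ) : Set ℕ :=
  {m | 0 < m ∧ Odd m ∧ (∀ p : ℕ, p.Prime → p ∣ m → p ∣ k) ∧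
    (k % 9 = 6 → ¬ (9 ∣ m))}

/-- The set `B_k`. -/
def setB (k : ℕ) : Set ℕ :=
  {m | 0 < m ∧ Even m ∧ (∀ p : ℕ, p.Prime → p ∣ m → p ∣ k * (k + 1)) ∧
    ((k % 9 = 2 ∨ k % 9 = 6) → ¬ (9 ∣ m))}

/-- The set `S_{k,n} = {m ∈ A_k ∪ B_k : m ≥ n}`. -/
def setS (k n : ℕ) : Set ℕ :=
  {m | m ∈ setA k ∪ setB k ∧ n ≤ m}

/-- The set `A_{5,k} = {a·5^b : a ∈ A_k, b ≥ 1}`. -/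
def setA5 (k : ℕ) : Set ℕ :=
  {m | ∃ a b : ℕ, a ∈ setA k ∧ 1 ≤ b ∧ m = a * 5 ^ b}

/-- The set `B_{5,k} = {a·5^b : a ∈ B_k, b ≥ 1}`. -/
def setB5 (k : ℕ) : Set ℕ :=
  {m | ∃ a b : ℕ, a ∈ setB k ∧ 1 ≤ b ∧ m = a * 5 ^ b}

/-- Companion sequence `V(k)`. -/
def shallitV (k : ℕ) : ℕ → ℤ
  | 0 => 2
  | 1 => 4 * (k : ℤ) + 2
  | n + 2 => (4 * (k : ℤ) + 2) * shallitV k (n + 1) - shallitV k n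

namespace ShallitAux

variable (k : ℕ)

lemma Urec (n : ℕ) :
    shallitU k (n + 2) = (4 * (k : ℤ) + 2) * shallitU k (n + 1) - shallitU k n := rfl

lemma Vrec (n : ℕ) :
    shallitV k (n + 2) = (4 * (k : ℤ) + 2) * shallitV k (n + 1) - shallitV k n := rfl

lemma lemG : ∀ b, shallitU k (b + 1) * shallitV k (b + 1)
    - shallitU k b * shallitV k (b + 2) = 4 * (k : ℤ) + 2 := by
  intro b
  induction b with
  | zero =>
      rw [Vrec k 0, show shallitU k (0 + 1) = 1 from rfl, show shallitU k 0 = 0 from rfl,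
        show shallitV k (0 + 1) = 4 * (k : ℤ) + 2 from rfl, show shallitV k 0 = 2 from rfl]
      ring
  | succ b ih =>
      have g : shallitU k (b + 2) * shallitV k (b + 2)
          - shallitU k (b + 1) * shallitV k (b + 3) = 4 * (k : ℤ) + 2 := by
        have hU : shallitU k (b + 2) = (4 * (k : ℤ) + 2) * shallitU k (b + 1) - shallitU k b :=
          Urec k b
        have hV : shallitV k (b + 3)
            = (4 * (k : ℤ) + 2) * shallitV k (b + 2) - shallitV k (b + 1) := Vrec k (b + 1)
        rw [hU, hV]
        linear_combination ih
      exact g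

lemma lemH : ∀ b, shallitU k (b + 2) * shallitV k (b + 1)
    - shallitU k (b + 1) * shallitV k (b + 2) = 2 := by
  intro b
  induction b with
  | zero =>
      rw [Urec k 0, Vrec k 0, show shallitU k (0 + 1) = 1 from rfl,
        show shallitU k 0 = 0 from rfl,
        show shallitV k (0 + 1) = 4 * (k : ℤ) + 2 from rfl, show shallitV k 0 = 2 from rfl]
      ring
  | succ b ih =>
      have g : shallitU k (b + 3) * shallitV k (b + 2)
          - shallitU k (b + 2) * shallitV k (b + 3) = 2 := by
        have hU : shallitU k (b + 3)
            = (4 * (k : ℤ) + 2) * shallitU k (b + 2) - shallitU k (b + 1) := Urec k (b + 1)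
        have hV : shallitV k (b + 3)
            = (4 * (k : ℤ) + 2) * shallitV k (b + 2) - shallitV k (b + 1) := Vrec k (b + 1)
        rw [hU, hV]
        linear_combination ih
      exact g

lemma lemP : ∀ b, shallitU k (2 * b) = shallitU k b * shallitV k b ∧
    shallitU k (2 * b + 1) = shallitU k b * shallitV k (b + 1) + 1 := by
  intro b
  induction b with
  | zero =>
      constructor
      · rw [show 2 * 0 = 0 from rfl, show shallitU k 0 = 0 from rfl]; ring
      · rw [show 2 * 0 + 1 = 1 from rfl, show shallitU k 1 = 1 from rfl,
          show shallitU k 0 = 0 from rfl]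
        ring
  | succ b ih =>
      obtain ⟨h1, h2⟩ := ih
      have hVb2 : shallitV k (b + 2)
          = (4 * (k : ℤ) + 2) * shallitV k (b + 1) - shallitV k b := Vrec k b
      have hUb2 : shallitU k (b + 2)
          = (4 * (k : ℤ) + 2) * shallitU k (b + 1) - shallitU k b := Urec k b
      have hA : shallitU k (2 * b + 2) = shallitU k (b + 1) * shallitV k (b + 1) := by
        rw [Urec k (2 * b), h1, h2]
        linear_combination -lemG k b - shallitU k b * hVb2
      have hB : shallitU k (2 * b + 3) = shallitU k (b + 1) * shallitV k (b + 2) + 1 := by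
        have h3 : shallitU k (2 * b + 3)
            = (4 * (k : ℤ) + 2) * shallitU k (2 * b + 2) - shallitU k (2 * b + 1) :=
          Urec k (2 * b + 1)
        rw [h3, hA, h2]
        linear_combination lemH k b - shallitV k (b + 1) * hUb2
      constructor
      · rw [show 2 * (b + 1) = 2 * b + 2 by ring]; exact hA
      · rw [show 2 * (b + 1) + 1 = 2 * b + 3 by ring, show b + 1 + 1 = b + 2 from rfl]
        exact hB

lemma key : ∀ a b, shallitU k (a + 2 * b) - shallitU k a
    = shallitU k b * shallitV k (a + b) := by
  have main : ∀ a, (∀ b, shallitU k (a + 2 * b) - shallitU k a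
      = shallitU k b * shallitV k (a + b)) ∧
      (∀ b, shallitU k (a + 1 + 2 * b) - shallitU k (a + 1)
      = shallitU k b * shallitV k (a + 1 + b)) := by
    intro a
    induction a with
    | zero =>
        constructor
        · intro b
          rw [Nat.zero_add, Nat.zero_add, (lemP k b).1, show shallitU k 0 = 0 from rfl]
          ring
        · intro b
          rw [show (0 : ℕ) + 1 = 1 from rfl, show 1 + 2 * b = 2 * b + 1 by omega,
            show 1 + b = b + 1 by omega, (lemP k b).2, show shallitU k 1 = 1 from rfl]
          ring
    | succ a ih =>
        obtain ⟨h1, h2⟩ := ih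
        refine ⟨h2, ?_⟩
        intro b
        rw [show a + 1 + 1 + 2 * b = a + 2 * b + 2 by omega,
          show a + 1 + 1 = a + 2 from rfl, show a + 1 + 1 + b = a + b + 2 by omega]
        have hh1 := h1 b
        have hh2 := h2 b
        rw [show a + 1 + 2 * b = a + 2 * b + 1 by omega,
          show a + 1 + b = a + b + 1 by omega] at hh2
        rw [Urec k (a + 2 * b), Urec k a, Vrec k (a + b)]
        linear_combination (4 * (k : ℤ) + 2) * hh2 - hh1
  exact fun a b => (main a).1 b

lemma parity : ∀ n, (2 : ℤ) ∣ shallitU k n - n := by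
  have main : ∀ n, ((2 : ℤ) ∣ shallitU k n - n) ∧
      ((2 : ℤ) ∣ shallitU k (n + 1) - ((n + 1 : ℕ) : ℤ)) := by
    intro n
    induction n with
    | zero =>
        constructor
        · exact ⟨0, by simp [shallitU]⟩
        · exact ⟨0, by simp [shallitU]⟩
    | succ n ih =>
        obtain ⟨h1, h2⟩ := ih
        refine ⟨h2, ?_⟩
        obtain ⟨c1, hc1⟩ := h1
        refine ⟨(2 * (k : ℤ) + 1) * shallitU k (n + 1) - c1 - (n : ℤ) - 1, ?_⟩
        rw [show n + 1 + 1 = n + 2 from rfl]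
        have hU := Urec k n
        push_cast
        push_cast at hc1
        linear_combination hU - hc1
  exact fun n => (main n).1

lemma Vmod4 : ∀ n, (4 : ℤ) ∣ shallitV k (n + 1) - 2 := by
  have main : ∀ n, ((4 : ℤ) ∣ shallitV k (n + 1) - 2) ∧
      ((4 : ℤ) ∣ shallitV k (n + 2) - 2) := by
    intro n
    induction n with
    | zero =>
        constructor
        · exact ⟨(k : ℤ), by
            rw [show shallitV k (0 + 1) = 4 * (k : ℤ) + 2 from rfl]; ring⟩
        · refine ⟨4 * (k : ℤ) ^ 2 + 4 * (k : ℤ), ?_⟩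
          rw [Vrec k 0, show shallitV k (0 + 1) = 4 * (k : ℤ) + 2 from rfl,
            show shallitV k 0 = 2 from rfl]
          ring
    | succ n ih =>
        obtain ⟨h1, h2⟩ := ih
        refine ⟨h2, ?_⟩
        obtain ⟨c1, hc1⟩ := h1
        obtain ⟨c2, hc2⟩ := h2
        refine ⟨(4 * (k : ℤ) + 2) * c2 - c1 + 2 * (k : ℤ), ?_⟩
        rw [show n + 1 + 2 = n + 3 from rfl]
        have hV : shallitV k (n + 3)
            = (4 * (k : ℤ) + 2) * shallitV k (n + 2) - shallitV k (n + 1) := Vrec k (n + 1)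
        linear_combination hV + (4 * (k : ℤ) + 2) * hc2 - hc1
  exact fun n => (main n).1

/-- Key divisibility transfer lemma: if `2^e` divides `U_{i+m} - U_i` then `2^e ∣ m`. -/
lemma lemT : ∀ e : ℕ, ∀ i m : ℕ,
    (2 : ℤ) ^ e ∣ shallitU k (i + m) - shallitU k i → 2 ^ e ∣ m := by
  intro e
  induction e with
  | zero => intro i m _; simpa using Nat.one_dvd m
  | succ e ih =>
      intro i m hdvd
      -- m is even
      have h2 : (2 : ℤ) ∣ shallitU k (i + m) - shallitU k i :=
        dvd_trans (dvd_pow_self 2 (Nat.succ_ne_zero e)) hdvd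
      have hm2 : (2 : ℤ) ∣ (m : ℤ) := by
        obtain ⟨c1, hc1⟩ := parity k (i + m)
        obtain ⟨c2, hc2⟩ := parity k i
        obtain ⟨c, hc⟩ := h2
        refine ⟨c - c1 + c2, ?_⟩
        push_cast at hc1 hc2 ⊢
        linear_combination hc - hc1 + hc2
      have hm2' : 2 ∣ m := by exact_mod_cast hm2
      obtain ⟨b, hb⟩ := hm2'
      rcases Nat.eq_zero_or_pos b with hb0 | hbpos
      · subst hb0; simp [hb]
      -- use the key identity
      have hkey := key k i b
      rw [← hb] at hkey
      rw [hkey] at hdvd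
      -- V (i + b) = 2 * u with u odd
      obtain ⟨ib, hib⟩ : ∃ j, i + b = j + 1 := ⟨i + b - 1, by omega⟩
      obtain ⟨t, ht⟩ := Vmod4 k ib
      rw [hib] at hdvd
      have hV : shallitV k (ib + 1) = 2 * (2 * t + 1) := by linarith
      rw [hV] at hdvd
      have hdvd' : (2 : ℤ) ^ e ∣ shallitU k b * (2 * t + 1) := by
        have h' : (2 : ℤ) * (2 : ℤ) ^ e ∣ (2 : ℤ) * (shallitU k b * (2 * t + 1)) := by
          rw [← pow_succ']
          convert hdvd using 1
          ring
        exact (mul_dvd_mul_iff_left (by norm_num : (2 : ℤ) ≠ 0)).mp h'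
      have hcop : IsCoprime ((2 : ℤ) ^ e) (2 * t + 1) := by
        apply IsCoprime.pow_left
        rw [Int.prime_two.coprime_iff_not_dvd]
        intro ⟨c, hc⟩
        omega
      have hUb : (2 : ℤ) ^ e ∣ shallitU k b := hcop.dvd_of_dvd_mul_right hdvd'
      have hUb' : (2 : ℤ) ^ e ∣ shallitU k (0 + b) - shallitU k 0 := by
        rw [Nat.zero_add, show shallitU k 0 = 0 from rfl, sub_zero]
        exact hUb
      obtain ⟨c, hc⟩ := ih 0 b hUb'
      exact ⟨c, by rw [hb, hc, pow_succ]; ring⟩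

lemma pow_discriminates (e n : ℕ) (hn : n ≤ 2 ^ e) : Discriminates k (2 ^ e) n := by
  intro i j hi hj hmod
  have hdvd : ((2 ^ e : ℕ) : ℤ) ∣ shallitU k j - shallitU k i := hmod.dvd
  have hdvd' : (2 : ℤ) ^ e ∣ shallitU k j - shallitU k i := by
    push_cast at hdvd; exact hdvd
  rcases le_total i j with hle | hle
  · obtain ⟨m, hm⟩ : ∃ m, j = i + m := ⟨j - i, by omega⟩
    subst hm
    have hdm := lemT k e i m hdvd'
    have hmlt : m < 2 ^ e := by omega
    have hm0 : m = 0 := by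
      rcases Nat.eq_zero_or_pos m with h | h
      · exact h
      · exact absurd (Nat.le_of_dvd h hdm) (by omega)
    omega
  · obtain ⟨m, hm⟩ : ∃ m, i = j + m := ⟨i - j, by omega⟩
    subst hm
    have hdvd'' : (2 : ℤ) ^ e ∣ shallitU k (j + m) - shallitU k j := by
      exact dvd_sub_comm.mp hdvd'
    have hdm := lemT k e j m hdvd''
    have hmlt : m < 2 ^ e := by omega
    have hm0 : m = 0 := by
      rcases Nat.eq_zero_or_pos m with h | h
      · exact h
      · exact absurd (Nat.le_of_dvd h hdm) (by omega)
    omega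

end ShallitAux

theorem stmt4 (k n : ℕ) (hk : 1 ≤ k) (hn : 1 ≤ n) :
    shallitD k n ≤ sInf {s : ℕ | (∃ b : ℕ, s = 2 ^ b) ∧ n ≤ s} := by
  set S : Set ℕ := {s : ℕ | (∃ b : ℕ, s = 2 ^ b) ∧ n ≤ s} with hS
  have hmem : sInf S ∈ S := Nat.sInf_mem ⟨2 ^ n, ⟨n, rfl⟩, (Nat.lt_two_pow_self (n := n)).le⟩
  obtain ⟨⟨b, hb⟩, hns⟩ := hmem
  unfold shallitD
  apply Nat.sInf_le
  refine ⟨by rw [hb]; positivity, ?_⟩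
  rw [hb]
  exact ShallitAux.pow_discriminates k b n (hb ▸ hns)
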